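/- With notation as above, suppose G is a textile map over an uncountable algebraically closed field K admitting approximate solutions modulo (x)^N for every N, and set A_k = ⋂_N C_N^k (the set of degree-< k truncations extendable to approximate solutions of every order). Then each A_k is nonempty and π_{l,k}(A_l) = A_k for all l ≥ k. -/

import Mathlib

/-- Total degree of a multi-exponent `β : Fin n →₀ ℕ`. -/
def expDeg {n : ℕ} (β : Fin n →₀ ℕ) : ℕ := β.sum fun _ e => e

/-- The family of coefficients of a tuple of power series. -/
noncomputable def coeffFun {K : Type*} [Field K] {n m : ℕ}
    (y : Fin m → MvPowerSeries (Fin n) K) : Fin m × (Fin n →₀ ℕ) → K :=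
  fun v => MvPowerSeries.coeff v.2 (y v.1)

/-- Extension of a degree-`< k` coefficient tuple by zero. -/
def extendZero {K : Type*} [Field K] {n m : ℕ} (k : ℕ)
    (z : {v : Fin m × (Fin n →₀ ℕ) // expDeg v.2 < k} → K) :
    Fin m × (Fin n →₀ ℕ) → K :=
  fun v => if h : expDeg v.2 < k then z ⟨v, h⟩ else 0

/-- Projection from degree-`< l` coefficient tuples to degree-`< k` ones. -/
def projTrunc {K : Type*} [Field K] {n m : ℕ} (l k : ℕ)
    (z : {v : Fin m × (Fin n →₀ ℕ) // expDeg v.2 < l} → K) :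
    {v : Fin m × (Fin n →₀ ℕ) // expDeg v.2 < k} → K :=
  fun v => if h : expDeg v.1.2 < l then z ⟨v.1, h⟩ else 0

/-- The variety `X_N` of degree-`< D N` truncations of approximate solutions
modulo `(x)^N`. -/
def Xset (K : Type*) [Field K] (n m q : ℕ)
    (P : Fin q → (Fin n →₀ ℕ) → MvPolynomial (Fin m × (Fin n →₀ ℕ)) K)
    (D : ℕ → ℕ) (N : ℕ) :
    Set ({v : Fin m × (Fin n →₀ ℕ) // expDeg v.2 < D N} → K) :=
  {z | ∀ j : Fin q, ∀ β : Fin n →₀ ℕ, expDeg β < N →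
    MvPolynomial.eval (extendZero (D N) z) (P j β) = 0}

/-- `A_k = ⋂_N C_N^k`: the degree-`< k` truncations extendable to approximate
solutions of every order. -/
def Aset (K : Type*) [Field K] (n m q : ℕ)
    (P : Fin q → (Fin n →₀ ℕ) → MvPolynomial (Fin m × (Fin n →₀ ℕ)) K)
    (D : ℕ → ℕ) (k : ℕ) :
    Set ({v : Fin m × (Fin n →₀ ℕ) // expDeg v.2 < k} → K) :=
  ⋂ (N : ℕ) (_ : k ≤ N), projTrunc (D N) k '' Xset K n m q P D N


open Cardinal in
/-- For `x` transcendental over `K`, the family `c ↦ (x - c)⁻¹` is `K`-linearly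
independent. -/
lemma linearIndependent_inv_sub {K L : Type*} [Field K] [Field L] [Algebra K L]
    {x : L} (hx : Transcendental K x) :
    LinearIndependent K (fun c : K => (x - algebraMap K L c)⁻¹) := by
  classical
  have hxc : ∀ c : K, x - algebraMap K L c ≠ 0 := by
    intro c h
    rw [sub_eq_zero] at h
    exact hx (h ▸ isAlgebraic_algebraMap c)
  rw [linearIndependent_iff']
  intro s g hsum c hc
  set q : Polynomial K :=
    ∑ i ∈ s, Polynomial.C (g i) * ∏ j ∈ s.erase i, (Polynomial.X - Polynomial.C j) with hq
  have haq : Polynomial.aeval x q = 0 := by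
    have h1 : (∑ i ∈ s, g i • (x - algebraMap K L i)⁻¹) *
        ∏ j ∈ s, (x - algebraMap K L j) = 0 := by rw [hsum, zero_mul]
    rw [Finset.sum_mul] at h1
    have h2 : ∀ i ∈ s, (g i • (x - algebraMap K L i)⁻¹) *
        ∏ j ∈ s, (x - algebraMap K L j)
        = g i • ∏ j ∈ s.erase i, (x - algebraMap K L j) := by
      intro i hi
      rw [← Finset.mul_prod_erase s _ hi, smul_mul_assoc, ← mul_assoc,
        inv_mul_cancel₀ (hxc i), one_mul]
    rw [Finset.sum_congr rfl h2] at h1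
    rw [hq, map_sum]
    rw [← h1]
    refine Finset.sum_congr rfl fun i hi => ?_
    rw [map_mul, map_prod, Polynomial.aeval_C, Algebra.smul_def]
    congr 1
    refine Finset.prod_congr rfl fun j hj => ?_
    rw [map_sub, Polynomial.aeval_X, Polynomial.aeval_C]
  have hq0 : q = 0 := by
    by_contra h
    exact hx ⟨q, h, haq⟩
  have hev := congrArg (Polynomial.eval c) hq0
  rw [hq, Polynomial.eval_finset_sum] at hev
  simp only [Polynomial.eval_mul, Polynomial.eval_C, Polynomial.eval_prod,
    Polynomial.eval_sub, Polynomial.eval_X, Polynomial.eval_zero] at hev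
  rw [Finset.sum_eq_single c] at hev
  · have hprod : (∏ j ∈ s.erase c, (c - j)) ≠ 0 := by
      rw [Finset.prod_ne_zero_iff]
      intro j hj
      exact sub_ne_zero.2 fun h => (Finset.mem_erase.1 hj).1 h.symm
    exact (mul_eq_zero.1 hev).resolve_right hprod
  · intro i hi hic
    refine mul_eq_zero_of_right _ (Finset.prod_eq_zero (Finset.mem_erase.2 ⟨?_, hc⟩) ?_)
    · exact fun h => hic h.symm
    · exact sub_self c
  · intro h
    exact absurd hc h

/-- A field extension of at most countable dimension over an uncountable field
is integral (algebraic). -/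
lemma isIntegral_of_rank_le_aleph0 {K L : Type*} [Field K] [Uncountable K]
    [Field L] [Algebra K L] (h : Module.rank K L ≤ Cardinal.aleph0) :
    Algebra.IsIntegral K L := by
  constructor
  intro x
  rw [← isAlgebraic_iff_isIntegral]
  by_contra halg
  have hli := linearIndependent_inv_sub (K := K) (L := L) halg
  have hcard := hli.cardinal_lift_le_rank
  have : Cardinal.mk K ≤ Cardinal.aleph0 := by
    have := hcard.trans (Cardinal.lift_le.2 h)
    rwa [Cardinal.lift_aleph0, Cardinal.lift_le_aleph0] at this
  exact (not_countable (α := K)) (Cardinal.mk_le_aleph0_iff.1 this)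


/-- An ideal in a polynomial ring in countably many variables over an uncountable
algebraically closed field which is not the unit ideal has a `K`-point. -/
lemma exists_point_of_ne_top {K : Type*} [Field K] [IsAlgClosed K] [Uncountable K]
    {σ : Type} [Countable σ] (I : Ideal (MvPolynomial σ K)) (hI : I ≠ ⊤) :
    ∃ z : σ → K, ∀ f ∈ I, MvPolynomial.eval z f = 0 := by
  obtain ⟨M, hM, hIM⟩ := I.exists_le_maximal hI
  haveI := hM
  -- rank bound, with the canonical instances on the quotient
  have hrank : Module.rank K (MvPolynomial σ K ⧸ M) ≤ Cardinal.aleph0 := by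
    have h1 := LinearMap.rank_le_of_surjective (Ideal.Quotient.mkₐ K M).toLinearMap
      (fun x => Ideal.Quotient.mk_surjective x)
    refine h1.trans ?_
    rw [MvPolynomial.rank_eq_lift, Cardinal.lift_le_aleph0]
    exact Cardinal.mk_le_aleph0
  letI : Field (MvPolynomial σ K ⧸ M) := Ideal.Quotient.field M
  haveI : Algebra.IsIntegral K (MvPolynomial σ K ⧸ M) :=
    isIntegral_of_rank_le_aleph0 hrank
  have hsurj : Function.Surjective (algebraMap K (MvPolynomial σ K ⧸ M)) :=
    IsAlgClosed.algebraMap_bijective_of_isIntegral.2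
  have hbij : Function.Bijective (Algebra.ofId K (MvPolynomial σ K ⧸ M)) :=
    ⟨fun a b h => (algebraMap K (MvPolynomial σ K ⧸ M)).injective h, hsurj⟩
  let e := AlgEquiv.ofBijective (Algebra.ofId K (MvPolynomial σ K ⧸ M)) hbij
  let φ : MvPolynomial σ K →ₐ[K] K := (e.symm.toAlgHom).comp (Ideal.Quotient.mkₐ K M)
  refine ⟨fun i => φ (MvPolynomial.X i), fun f hf => ?_⟩
  have h2 : MvPolynomial.eval (fun i => φ (MvPolynomial.X i)) f = φ f := by
    conv_rhs => rw [MvPolynomial.aeval_unique φ]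
    rw [MvPolynomial.aeval_def, Algebra.algebraMap_self]
    rfl
  rw [h2]
  show e.symm (Ideal.Quotient.mkₐ K M f) = 0
  rw [show (Ideal.Quotient.mkₐ K M f : MvPolynomial σ K ⧸ M) = 0 from
    Ideal.Quotient.eq_zero_iff_mem.2 (hIM hf), map_zero]


lemma my_eval_congr {σ R : Type*} [CommSemiring R] {g₁ g₂ : σ → R} {p : MvPolynomial σ R}
    (h : ∀ i ∈ p.vars, g₁ i = g₂ i) : MvPolynomial.eval g₁ p = MvPolynomial.eval g₂ p :=
  MvPolynomial.hom_congr_vars (by ext c; simp) (fun i h1 _ => by simpa using h i h1) rfl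

section App

variable {K : Type*} [Field K] [IsAlgClosed K] [Uncountable K] {n m q : ℕ}
  (P : Fin q → (Fin n →₀ ℕ) → MvPolynomial (Fin m × (Fin n →₀ ℕ)) K)
  (D : ℕ → ℕ)

/-- A global solution of all the equations truncates into every `Aset`. -/
lemma trunc_mem_Aset (hD : ∀ N, N ≤ D N)
    (hdep : ∀ N : ℕ, ∀ j : Fin q, ∀ β : Fin n →₀ ℕ, expDeg β < N →
      ∀ v ∈ (P j β).vars, expDeg v.2 < D N)
    {z : Fin m × (Fin n →₀ ℕ) → K}
    (hz : ∀ j β, MvPolynomial.eval z (P j β) = 0) (k : ℕ) :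
    (fun v => z v.1) ∈ Aset K n m q P D k := by
  refine Set.mem_iInter.2 fun N => Set.mem_iInter.2 fun hkN => ?_
  refine ⟨fun v => z v.1, fun j β hβ => ?_, ?_⟩
  · have hagree : ∀ i ∈ (P j β).vars,
        extendZero (D N) (fun v : {v : Fin m × (Fin n →₀ ℕ) // expDeg v.2 < D N} => z v.1) i
          = z i := by
      intro i hi
      simp [extendZero, hdep N j β hβ i hi]
    rw [my_eval_congr hagree]
    exact hz j β
  · funext v
    have hv : expDeg v.1.2 < D N := lt_of_lt_of_le (lt_of_lt_of_le v.2 hkN) (hD N)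
    simp [projTrunc, hv]

/-- Any element of `Aset k` extends to a global solution of all equations. -/
lemma exists_full_solution (hD : ∀ N, N ≤ D N) (k : ℕ)
    (a : {v : Fin m × (Fin n →₀ ℕ) // expDeg v.2 < k} → K)
    (ha : a ∈ Aset K n m q P D k) :
    ∃ z : Fin m × (Fin n →₀ ℕ) → K,
      (∀ j β, MvPolynomial.eval z (P j β) = 0) ∧
      ∀ v : {v : Fin m × (Fin n →₀ ℕ) // expDeg v.2 < k}, z v.1 = a v := by
  classical
  set T : ℕ → Set (MvPolynomial (Fin m × (Fin n →₀ ℕ)) K) := fun N =>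
    {f | ∃ j β, expDeg β < N ∧ f = P j β} ∪
    {f | ∃ v : {v : Fin m × (Fin n →₀ ℕ) // expDeg v.2 < k},
      f = MvPolynomial.X v.1 - MvPolynomial.C (a v)} with hT
  have hTmono : Monotone T := by
    intro N N' h
    refine Set.union_subset_union_left _ ?_
    rintro f ⟨j, β, hβ, hf⟩
    exact ⟨j, β, lt_of_lt_of_le hβ h, hf⟩
  have hne : Ideal.span (⋃ N, T N) ≠ ⊤ := by
    intro htop
    have h1 : (1 : MvPolynomial (Fin m × (Fin n →₀ ℕ)) K) ∈ Ideal.span (⋃ N, T N) :=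
      htop ▸ Submodule.mem_top
    rw [Ideal.span, Submodule.span_iUnion] at h1
    have hmono2 : Monotone fun N =>
        Submodule.span (MvPolynomial (Fin m × (Fin n →₀ ℕ)) K) (T N) :=
      fun _ _ h => Submodule.span_mono (hTmono h)
    obtain ⟨N, hN⟩ := (Submodule.mem_iSup_of_directed _ hmono2.directed_le).1 h1
    have ha' := Set.mem_iInter.1 (Set.mem_iInter.1 ha (max N k)) (le_max_right N k)
    obtain ⟨w0, hw0X, hw0p⟩ := ha'
    have hker : Submodule.span (MvPolynomial (Fin m × (Fin n →₀ ℕ)) K) (T N) ≤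
        RingHom.ker (MvPolynomial.eval (extendZero (D (max N k)) w0)) := by
      rw [Submodule.span_le]
      rintro f (⟨j, β, hβ, rfl⟩ | ⟨v, rfl⟩)
      · exact hw0X j β (lt_of_lt_of_le hβ (le_max_left N k))
      · have hvk : expDeg v.1.2 < D (max N k) :=
          lt_of_lt_of_le (lt_of_lt_of_le v.2 (le_max_right N k)) (hD _)
        have h2 : extendZero (D (max N k)) w0 v.1 = w0 ⟨v.1, hvk⟩ := by
          simp [extendZero, hvk]
        have h3 : a v = w0 ⟨v.1, hvk⟩ := by
          rw [← hw0p]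
          simp [projTrunc, hvk]
        simp only [SetLike.mem_coe, RingHom.mem_ker, map_sub, MvPolynomial.eval_X,
          MvPolynomial.eval_C, h2, h3, sub_self]
    have h4 := hker hN
    rw [RingHom.mem_ker, map_one] at h4
    exact one_ne_zero h4
  obtain ⟨z, hz⟩ := exists_point_of_ne_top _ hne
  refine ⟨z, fun j β => hz _ (Ideal.subset_span
    (Set.mem_iUnion.2 ⟨expDeg β + 1, Or.inl ⟨j, β, Nat.lt_succ_self _, rfl⟩⟩)), fun v => ?_⟩
  have h5 := hz _ (Ideal.subset_span (Set.mem_iUnion.2 ⟨0, Or.inr ⟨v, rfl⟩⟩))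
  rw [map_sub, MvPolynomial.eval_X, MvPolynomial.eval_C, sub_eq_zero] at h5
  exact h5

end App

/-- If the textile map (over an uncountable algebraically closed field) admits
approximate solutions modulo `(x)^N` for every `N`, then each `A_k` is nonempty and
`π_{l,k}(A_l) = A_k` for all `l ≥ k`. -/
theorem Aset_nonempty_and_compatible
    (K : Type*) [Field K] [IsAlgClosed K] [Uncountable K]
    (n m q : ℕ)
    (P : Fin q → (Fin n →₀ ℕ) → MvPolynomial (Fin m × (Fin n →₀ ℕ)) K)
    (D : ℕ → ℕ) (hD : ∀ N, N ≤ D N)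
    (hdep : ∀ N : ℕ, ∀ j : Fin q, ∀ β : Fin n →₀ ℕ, expDeg β < N →
      ∀ v ∈ (P j β).vars, expDeg v.2 < D N)
    (happrox : ∀ N : ℕ, ∃ y : Fin m → MvPowerSeries (Fin n) K,
      ∀ j : Fin q, ∀ β : Fin n →₀ ℕ, expDeg β < N →
        MvPolynomial.eval (coeffFun y) (P j β) = 0) :
    (∀ k : ℕ, (Aset K n m q P D k).Nonempty) ∧
    (∀ l k : ℕ, k ≤ l →
      projTrunc l k '' Aset K n m q P D l = Aset K n m q P D k) := by
  have hpoint : ∀ k (a : {v : Fin m × (Fin n →₀ ℕ) // expDeg v.2 < k} → K),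
      a ∈ Aset K n m q P D k →
      ∃ z : Fin m × (Fin n →₀ ℕ) → K,
        (∀ j β, MvPolynomial.eval z (P j β) = 0) ∧ ∀ v, z v.1 = a v :=
    fun k a ha => exists_full_solution P D hD k a ha
  constructor
  · intro k
    have ha0 : (fun _ => (0 : K)) ∈ Aset K n m q P D 0 := by
      refine Set.mem_iInter.2 fun N => Set.mem_iInter.2 fun _ => ?_
      obtain ⟨y, hy⟩ := happrox N
      refine ⟨fun v => coeffFun y v.1, fun j β hβ => ?_, ?_⟩
      · have hagree : ∀ i ∈ (P j β).vars,
            extendZero (D N)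
              (fun v : {v : Fin m × (Fin n →₀ ℕ) // expDeg v.2 < D N} => coeffFun y v.1) i
              = coeffFun y i := by
          intro i hi
          simp [extendZero, hdep N j β hβ i hi]
        rw [my_eval_congr hagree]
        exact hy j β hβ
      · funext v
        exact absurd v.2 (Nat.not_lt_zero _)
    obtain ⟨z, hz, -⟩ := hpoint 0 _ ha0
    exact ⟨_, trunc_mem_Aset P D hD hdep hz k⟩
  · intro l k hkl
    apply Set.Subset.antisymm
    · rintro _ ⟨a, ha, rfl⟩
      obtain ⟨z, hz, hza⟩ := hpoint l a ha
      have heq : projTrunc l k a = fun v : {v : Fin m × (Fin n →₀ ℕ) // expDeg v.2 < k} =>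
          z v.1 := by
        funext v
        have hv : expDeg v.1.2 < l := lt_of_lt_of_le v.2 hkl
        rw [projTrunc, dif_pos hv]
        exact (hza ⟨v.1, hv⟩).symm
      rw [heq]
      exact trunc_mem_Aset P D hD hdep hz k
    · intro a ha
      obtain ⟨z, hz, hza⟩ := hpoint k a ha
      refine ⟨fun v => z v.1, trunc_mem_Aset P D hD hdep hz l, ?_⟩
      funext v
      have hv : expDeg v.1.2 < l := lt_of_lt_of_le v.2 hkl
      rw [projTrunc, dif_pos hv]
      exact hza v
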